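/- arXiv:1808.06761 — 2 statements merged into one kernel-verified Lean document; each statement's English description precedes it below -/
import Mathlib

section
/- Let X be a nonnegative random variable. Then E[ln(1+X)] = ∫_0^∞ (e^{−z}/z)(1 − E[e^{−zX}]) dz, where both sides are interpreted as values in [0,∞]. -/
open MeasureTheory Real Set Filter Topology

lemma aux_real_integral_exp (c : ℝ) (hc : 0 < c) :
    ∫ z in Set.Ioi (0 : ℝ), Real.exp (-c * z) = c⁻¹ := by
  have hderiv : ∀ z ∈ Set.Ioi (0 : ℝ),
      HasDerivAt (fun z : ℝ => -Real.exp (-c * z) / c) (Real.exp (-c * z)) z := by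
    intro z _
    have h : HasDerivAt (fun z : ℝ => -c * z) (-c) z := by
      simpa using (hasDerivAt_id z).const_mul (-c)
    have := (h.exp).neg.div_const c
    convert this using 1
    case e'_9 => field_simp
    all_goals rfl
  have htend : Tendsto (fun z : ℝ => -Real.exp (-c * z) / c) atTop (𝓝 (-0 / c)) := by
    refine Tendsto.div_const (Tendsto.neg ?_) _
    exact Real.tendsto_exp_atBot.comp (tendsto_id.const_mul_atTop_of_neg (by linarith))
  have := integral_Ioi_of_hasDerivAt_of_tendsto
    (f := fun z : ℝ => -Real.exp (-c * z) / c) (f' := fun z => Real.exp (-c * z)) (a := 0)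
    (Continuous.continuousWithinAt (by continuity)) hderiv (exp_neg_integrableOn_Ioi 0 hc) htend
  rw [this]
  simp [neg_div, one_div]

lemma aux_lintegral_exp (c : ℝ) (hc : 0 < c) :
    ∫⁻ z in Set.Ioi (0 : ℝ), ENNReal.ofReal (Real.exp (-c * z)) = ENNReal.ofReal c⁻¹ := by
  rw [← aux_real_integral_exp c hc,
    ← ofReal_integral_eq_lintegral_ofReal (exp_neg_integrableOn_Ioi 0 hc)
      (Filter.Eventually.of_forall fun z => (Real.exp_pos _).le)]

lemma aux_inner (x : ℝ) (hx : 0 ≤ x) (z : ℝ) (hz : 0 < z) :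
    ∫⁻ t in Set.Ioo (0 : ℝ) x, ENNReal.ofReal (Real.exp (-z * (1 + t))) =
      ENNReal.ofReal ((Real.exp (-z) / z) * (1 - Real.exp (-z * x))) := by
  have hcont : ContinuousOn (fun t : ℝ => Real.exp (-z * (1 + t))) (Set.Icc 0 x) := by
    fun_prop
  have hint : IntegrableOn (fun t : ℝ => Real.exp (-z * (1 + t))) (Set.Ioo 0 x) :=
    (hcont.integrableOn_Icc).mono_set Set.Ioo_subset_Icc_self
  rw [← ofReal_integral_eq_lintegral_ofReal hint
      (Filter.Eventually.of_forall fun t => (Real.exp_pos _).le)]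
  congr 1
  have : ∫ t in Set.Ioo (0 : ℝ) x, Real.exp (-z * (1 + t)) =
      ∫ t in (0 : ℝ)..x, Real.exp (-z * (1 + t)) := by
    rw [intervalIntegral.integral_of_le hx, integral_Ioc_eq_integral_Ioo]
  rw [this]
  have hderiv : ∀ t ∈ Set.uIcc (0 : ℝ) x,
      HasDerivAt (fun t : ℝ => -Real.exp (-z * (1 + t)) / z) (Real.exp (-z * (1 + t))) t := by
    intro t _
    have h : HasDerivAt (fun t : ℝ => -z * (1 + t)) (-z) t := by
      have := ((hasDerivAt_id t).const_add 1).const_mul (-z)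
      simpa using this
    have := (h.exp).neg.div_const z
    convert this using 1
    case e'_9 => field_simp
    all_goals rfl
  rw [intervalIntegral.integral_eq_sub_of_hasDerivAt hderiv
    ((Continuous.intervalIntegrable (by fun_prop) _ _))]
  have e1 : -z * (1 + x) = -z + -z * x := by ring
  have e2 : -z * (1 + (0:ℝ)) = -z := by ring
  rw [e1, e2, Real.exp_add]
  field_simp
  ring

lemma aux_log (x : ℝ) (hx : 0 ≤ x) :
    ∫⁻ t in Set.Ioo (0 : ℝ) x, ENNReal.ofReal ((1 + t)⁻¹) =
      ENNReal.ofReal (Real.log (1 + x)) := by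
  have hcont : ContinuousOn (fun t : ℝ => (1 + t)⁻¹) (Set.Icc 0 x) := by
    apply ContinuousOn.inv₀ (by fun_prop)
    intro t ht
    have := ht.1
    positivity
  have hint : IntegrableOn (fun t : ℝ => (1 + t)⁻¹) (Set.Ioo 0 x) :=
    (hcont.integrableOn_Icc).mono_set Set.Ioo_subset_Icc_self
  rw [← ofReal_integral_eq_lintegral_ofReal hint
      (ae_restrict_of_forall_mem measurableSet_Ioo fun t ht => by
        have := ht.1; positivity)]
  congr 1
  rw [show ∫ t in Set.Ioo (0 : ℝ) x, (1 + t)⁻¹ = ∫ t in (0 : ℝ)..x, (1 + t)⁻¹ by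
    rw [intervalIntegral.integral_of_le hx, integral_Ioc_eq_integral_Ioo]]
  have := intervalIntegral.integral_comp_add_left (a := (0:ℝ)) (b := x)
    (fun u : ℝ => u⁻¹) 1
  rw [this, add_zero, integral_inv (by
    intro h
    rcases Set.mem_uIcc.1 h with ⟨h1, _⟩ | ⟨_, h2⟩ <;> linarith)]
  rw [div_one]

/-- Frullani-type identity: `∫_0^∞ (e^{-z}/z)(1-e^{-zx}) dz = log(1+x)` for `x ≥ 0`. -/
lemma frullani (x : ℝ) (hx : 0 ≤ x) :
    ∫⁻ z in Set.Ioi (0 : ℝ),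
        ENNReal.ofReal (Real.exp (-z) / z) * ENNReal.ofReal (1 - Real.exp (-z * x)) =
      ENNReal.ofReal (Real.log (1 + x)) := by
  have step1 : ∀ z ∈ Set.Ioi (0 : ℝ),
      ENNReal.ofReal (Real.exp (-z) / z) * ENNReal.ofReal (1 - Real.exp (-z * x)) =
        ∫⁻ t in Set.Ioo (0 : ℝ) x, ENNReal.ofReal (Real.exp (-z * (1 + t))) := by
    intro z hz
    have hz' : (0:ℝ) < z := hz
    rw [aux_inner x hx z hz', ENNReal.ofReal_mul (by positivity)]
  rw [setLIntegral_congr_fun measurableSet_Ioi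
    step1]
  have hmeas : Measurable (fun p : ℝ × ℝ => ENNReal.ofReal (Real.exp (-p.1 * (1 + p.2)))) :=
    ((measurable_fst.neg.mul (measurable_const.add measurable_snd)).exp).ennreal_ofReal
  rw [lintegral_lintegral_swap hmeas.aemeasurable]
  have step2 : ∀ t ∈ Set.Ioo (0 : ℝ) x,
      (∫⁻ z in Set.Ioi (0 : ℝ), ENNReal.ofReal (Real.exp (-z * (1 + t)))) =
        ENNReal.ofReal ((1 + t)⁻¹) := by
    intro t ht
    have h1t : 0 < 1 + t := by have := ht.1; linarith
    rw [← aux_lintegral_exp (1 + t) h1t]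
    congr 1 with z
    ring_nf
  rw [setLIntegral_congr_fun measurableSet_Ioo
    step2]
  exact aux_log x hx

/-- For a nonnegative random variable `X`,
`E[ln(1+X)] = ∫_0^∞ (e^{-z}/z)(1 - E[e^{-zX}]) dz`, both sides in `[0,∞]`. -/
theorem lintegral_log_one_add_eq_integral_laplace
    {Ω : Type*} [MeasurableSpace Ω] (μ : Measure Ω) [IsProbabilityMeasure μ]
    (X : Ω → ℝ) (hX : Measurable X) (hpos : ∀ ω, 0 ≤ X ω) :
    ∫⁻ ω, ENNReal.ofReal (Real.log (1 + X ω)) ∂μ =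
      ∫⁻ z in Set.Ioi (0 : ℝ),
        ENNReal.ofReal ((Real.exp (-z) / z) * (1 - ∫ ω, Real.exp (-z * X ω) ∂μ)) := by
  have hexp_le : ∀ (z : ℝ), 0 < z → ∀ ω, Real.exp (-z * X ω) ≤ 1 := by
    intro z hz ω
    rw [← Real.exp_zero]
    apply Real.exp_le_exp.2
    have := hpos ω
    nlinarith
  have hint : ∀ (z : ℝ), 0 < z → Integrable (fun ω => Real.exp (-z * X ω)) μ := by
    intro z hz
    apply Integrable.mono' (integrable_const 1)
      ((hX.const_mul (-z)).exp.aestronglyMeasurable)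
    refine Filter.Eventually.of_forall fun ω => ?_
    rw [Real.norm_eq_abs, abs_of_pos (Real.exp_pos _)]
    exact hexp_le z hz ω
  have step : ∀ z ∈ Set.Ioi (0 : ℝ),
      ENNReal.ofReal ((Real.exp (-z) / z) * (1 - ∫ ω, Real.exp (-z * X ω) ∂μ)) =
        ∫⁻ ω, ENNReal.ofReal (Real.exp (-z) / z) *
          ENNReal.ofReal (1 - Real.exp (-z * X ω)) ∂μ := by
    intro z hz
    have hz' : (0:ℝ) < z := hz
    have h1 : (1 : ℝ) - ∫ ω, Real.exp (-z * X ω) ∂μ =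
        ∫ ω, (1 - Real.exp (-z * X ω)) ∂μ := by
      rw [integral_sub (integrable_const 1) (hint z hz'), integral_const]
      simp
    have hint2 : Integrable (fun ω => 1 - Real.exp (-z * X ω)) μ :=
      (integrable_const 1).sub (hint z hz')
    rw [h1, ENNReal.ofReal_mul (by positivity),
      ofReal_integral_eq_lintegral_ofReal hint2
        (Filter.Eventually.of_forall fun ω => by
          have := hexp_le z hz' ω
          simp only [Pi.zero_apply]
          linarith),
      lintegral_const_mul _ (f := fun ω => ENNReal.ofReal (1 - Real.exp (-z * X ω)))
        ((measurable_const.sub ((hX.const_mul (-z)).exp)).ennreal_ofReal)]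
  rw [setLIntegral_congr_fun measurableSet_Ioi step]
  have hmeas : Measurable (fun p : ℝ × Ω => ENNReal.ofReal (Real.exp (-p.1) / p.1) *
      ENNReal.ofReal (1 - Real.exp (-p.1 * X p.2))) := by
    apply Measurable.mul (f := fun p : ℝ × Ω => ENNReal.ofReal (Real.exp (-p.1) / p.1))
      (g := fun p : ℝ × Ω => ENNReal.ofReal (1 - Real.exp (-p.1 * X p.2)))
    · exact (measurable_fst.neg.exp.div measurable_fst).ennreal_ofReal
    · exact (measurable_const.sub
        ((measurable_fst.neg.mul (hX.comp measurable_snd)).exp)).ennreal_ofReal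
  rw [lintegral_lintegral_swap hmeas.aemeasurable]
  apply lintegral_congr fun ω => ?_
  exact (frullani (X ω) (hpos ω)).symm
end

section
/- Let S and I be independent nonnegative random variables and let σ^2 > 0. Then the ergodic rate satisfies E[ln(1 + S/(I + σ^2))] = ∫_0^∞ (e^{−sσ^2}/s) · E[e^{−sI}] · (1 − E[e^{−sS}]) ds, where both sides are interpreted as values in [0,∞]. -/
open MeasureTheory ProbabilityTheory

open Real Set

lemma int_exp_interval {s a b : ℝ} (hs : s ≠ 0) :
    ∫ t in a..b, Real.exp (-(s*t)) = (Real.exp (-(s*a)) - Real.exp (-(s*b)))/s := by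
  have h : ∀ t ∈ Set.uIcc a b, HasDerivAt (fun t => -Real.exp (-(s*t))/s) (Real.exp (-(s*t))) t := by
    intro t _
    have : HasDerivAt (fun t => -(s*t)) (-s) t := by
      simpa using ((hasDerivAt_id t).const_mul s).fun_neg
    have := (this.exp).fun_neg.div_const s
    exact this.congr_deriv (by rw [mul_neg, neg_neg, mul_div_assoc, div_self hs, mul_one])
  rw [intervalIntegral.integral_eq_sub_of_hasDerivAt h
    ((Real.continuous_exp.comp (by continuity)).intervalIntegrable a b)]
  ring

lemma int_exp_Ioi {t : ℝ} (ht : 0 < t) :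
    ∫ s in Set.Ioi (0:ℝ), Real.exp (-(t*s)) = 1/t := by
  have := MeasureTheory.integral_comp_mul_left_Ioi (fun u => Real.exp (-u)) 0 ht
  simp only [mul_zero, integral_exp_neg_Ioi, neg_zero, Real.exp_zero, smul_eq_mul, mul_one] at this
  simpa [one_div] using this

lemma frullani_log {a b : ℝ} (ha : 0 < a) (hab : a ≤ b) :
    ENNReal.ofReal (Real.log b - Real.log a) =
      ∫⁻ s in Set.Ioi (0:ℝ),
        ENNReal.ofReal ((Real.exp (-(s*a)) - Real.exp (-(s*b)))/s) := by
  have hb : 0 < b := ha.trans_le hab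
  -- step 1: rewrite integrand as double lintegral
  have step1 : ∀ s ∈ Set.Ioi (0:ℝ),
      ENNReal.ofReal ((Real.exp (-(s*a)) - Real.exp (-(s*b)))/s) =
        ∫⁻ t in Set.Ioc a b, ENNReal.ofReal (Real.exp (-(s*t))) := by
    intro s hs
    rw [← int_exp_interval (ne_of_gt hs)]
    rw [intervalIntegral.integral_of_le hab]
    rw [ofReal_integral_eq_lintegral_ofReal]
    · exact ((Real.continuous_exp.comp (by continuity)).intervalIntegrable a b).1
    · exact Filter.Eventually.of_forall fun t => (Real.exp_pos _).le
  rw [setLIntegral_congr_fun measurableSet_Ioi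
    step1]
  -- step 2: swap
  rw [lintegral_lintegral_swap]
  swap
  · apply Measurable.aemeasurable
    apply Measurable.ennreal_ofReal
    have : Continuous fun p : ℝ × ℝ => Real.exp (-(p.1 * p.2)) := by continuity
    exact this.measurable
  -- step 3: inner integral
  have step3 : ∀ t ∈ Set.Ioc a b,
      (∫⁻ s in Set.Ioi (0:ℝ), ENNReal.ofReal (Real.exp (-(s*t)))) =
        ENNReal.ofReal t⁻¹ := by
    intro t ht
    have ht0 : 0 < t := ha.trans ht.1
    have hcomm : ∀ s : ℝ, -(s*t) = -(t*s) := fun s => by ring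
    simp only [hcomm]
    rw [← ofReal_integral_eq_lintegral_ofReal
      (by simpa [neg_mul, IntegrableOn] using exp_neg_integrableOn_Ioi 0 ht0)
      (Filter.Eventually.of_forall fun s => (Real.exp_pos _).le),
      int_exp_Ioi ht0, one_div]
  rw [setLIntegral_congr_fun measurableSet_Ioc step3]
  -- step 4: compute ∫ t in Ioc a b, 1/t
  have hint : IntegrableOn (fun t : ℝ => t⁻¹) (Set.Ioc a b) := by
    have : IntervalIntegrable (fun t : ℝ => t⁻¹) volume a b := by
      apply intervalIntegral.intervalIntegrable_inv
      · intro x hx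
        rw [Set.uIcc_of_le hab] at hx
        exact (ha.trans_le hx.1).ne'
      · exact continuousOn_id
    exact this.1
  rw [← ofReal_integral_eq_lintegral_ofReal hint
    (ae_restrict_of_forall_mem measurableSet_Ioc
      fun t ht => inv_nonneg.2 (ha.trans ht.1).le)]
  congr 1
  rw [← intervalIntegral.integral_of_le hab, integral_inv_of_pos ha hb,
    Real.log_div hb.ne' ha.ne']


/-- Ergodic rate formula: for independent nonnegative `S` (signal) and `I`
(interference) and noise power `σ² > 0`,
`E[ln(1 + S/(I+σ²))] = ∫_0^∞ (e^{-sσ²}/s) E[e^{-sI}] (1 - E[e^{-sS}]) ds`,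
both sides in `[0,∞]`. -/
theorem ergodic_rate_laplace_formula
    {Ω : Type*} [MeasurableSpace Ω] (P : Measure Ω) [IsProbabilityMeasure P]
    (S I : Ω → ℝ) (hS : Measurable S) (hI : Measurable I)
    (hSpos : ∀ ω, 0 ≤ S ω) (hIpos : ∀ ω, 0 ≤ I ω)
    (hindep : IndepFun S I P) (σ2 : ℝ) (hσ2 : 0 < σ2) :
    ∫⁻ ω, ENNReal.ofReal (Real.log (1 + S ω / (I ω + σ2))) ∂P =
      ∫⁻ s in Set.Ioi (0 : ℝ),
        ENNReal.ofReal ((Real.exp (-s * σ2) / s) * (∫ ω, Real.exp (-s * I ω) ∂P) *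
          (1 - ∫ ω, Real.exp (-s * S ω) ∂P)) := by
  simp only [neg_mul]
  -- pointwise Frullani rewrite
  have hpoint : ∀ ω, ENNReal.ofReal (Real.log (1 + S ω / (I ω + σ2))) =
      ∫⁻ s in Set.Ioi (0:ℝ), ENNReal.ofReal
        ((Real.exp (-(s*(I ω + σ2))) - Real.exp (-(s*(S ω + (I ω + σ2)))))/s) := by
    intro ω
    have ha : 0 < I ω + σ2 := add_pos_of_nonneg_of_pos (hIpos ω) hσ2
    have hb : 0 < S ω + (I ω + σ2) := add_pos_of_nonneg_of_pos (hSpos ω) ha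
    have hab : I ω + σ2 ≤ S ω + (I ω + σ2) := le_add_of_nonneg_left (hSpos ω)
    rw [show (1 + S ω / (I ω + σ2)) = (S ω + (I ω + σ2)) / (I ω + σ2) by
      field_simp; ring]
    rw [Real.log_div hb.ne' ha.ne']
    exact frullani_log ha hab
  simp only [hpoint]
  rw [lintegral_lintegral_swap]
  swap
  · apply Measurable.aemeasurable
    apply Measurable.ennreal_ofReal
    have m1 : Measurable fun p : Ω × ℝ => Real.exp (-(p.2 * (I p.1 + σ2))) :=
      Real.measurable_exp.comp (measurable_snd.mul ((hI.comp measurable_fst).add_const σ2)).neg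
    have m2 : Measurable fun p : Ω × ℝ =>
        Real.exp (-(p.2 * (S p.1 + (I p.1 + σ2)))) :=
      Real.measurable_exp.comp (measurable_snd.mul
        ((hS.comp measurable_fst).add ((hI.comp measurable_fst).add_const σ2))).neg
    exact (m1.sub m2).div measurable_snd
  apply setLIntegral_congr_fun measurableSet_Ioi
  intro s hs
  have hs0 : (0:ℝ) < s := hs
  -- integrability of exponentials
  have hint : ∀ (X : Ω → ℝ), Measurable X → (∀ ω, 0 ≤ X ω) →
      Integrable (fun ω => Real.exp (-(s * X ω))) P := by
    intro X hX hXpos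
    refine ⟨(Real.measurable_exp.comp
      ((measurable_const.mul hX).neg)).aestronglyMeasurable, ?_⟩
    apply HasFiniteIntegral.of_bounded (C := 1)
    filter_upwards with ω
    rw [Real.norm_eq_abs, abs_of_pos (Real.exp_pos _)]
    exact Real.exp_le_one_iff.2 (neg_nonpos.2 (mul_nonneg hs0.le (hXpos ω)))
  have hImeas := hint I hI hIpos
  have hSmeas := hint S hS hSpos
  have hSImeas : Integrable (fun ω => Real.exp (-(s * S ω)) * Real.exp (-(s * I ω))) P := by
    have := hint (fun ω => S ω + I ω) (hS.add hI) (fun ω => add_nonneg (hSpos ω) (hIpos ω))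
    apply this.congr
    filter_upwards with ω
    rw [← Real.exp_add]
    ring_nf
  -- pointwise factorization
  have hfac : ∀ ω, (Real.exp (-(s*(I ω + σ2))) - Real.exp (-(s*(S ω + (I ω + σ2)))))/s =
      (Real.exp (-(s*σ2))/s) * (Real.exp (-(s * I ω)) * (1 - Real.exp (-(s * S ω)))) := by
    intro ω
    have e1 : -(s*(I ω + σ2)) = -(s * I ω) + -(s * σ2) := by ring
    have e2 : -(s*(S ω + (I ω + σ2))) = -(s * S ω) + (-(s * I ω) + -(s * σ2)) := by ring
    rw [e1, e2, Real.exp_add, Real.exp_add, Real.exp_add]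
    ring
  simp only [hfac]
  have heq : (fun ω => Real.exp (-(s * I ω)) * (1 - Real.exp (-(s * S ω)))) =
      fun ω => Real.exp (-(s * I ω)) - Real.exp (-(s * S ω)) * Real.exp (-(s * I ω)) := by
    funext ω; ring
  have hprod : Integrable (fun ω => (Real.exp (-(s*σ2))/s) *
      (Real.exp (-(s * I ω)) * (1 - Real.exp (-(s * S ω))))) P := by
    apply Integrable.const_mul
    rw [heq]
    exact hImeas.sub hSImeas
  have hnn : 0 ≤ᵐ[P] fun ω => (Real.exp (-(s*σ2))/s) *
      (Real.exp (-(s * I ω)) * (1 - Real.exp (-(s * S ω)))) := by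
    apply Filter.Eventually.of_forall
    intro ω
    have h1 : Real.exp (-(s * S ω)) ≤ 1 :=
      Real.exp_le_one_iff.2 (neg_nonpos.2 (mul_nonneg hs0.le (hSpos ω)))
    exact mul_nonneg (by positivity)
      (mul_nonneg (Real.exp_pos _).le (sub_nonneg.2 h1))
  rw [← ofReal_integral_eq_lintegral_ofReal hprod hnn]
  congr 1
  rw [integral_const_mul]
  conv_lhs => rw [heq]
  rw [integral_sub hImeas hSImeas]
  have hcomp : IndepFun (fun ω => Real.exp (-(s * S ω)))
      (fun ω => Real.exp (-(s * I ω))) P :=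
    hindep.comp (Real.measurable_exp.comp (measurable_const.mul measurable_id).neg)
      (Real.measurable_exp.comp (measurable_const.mul measurable_id).neg)
  have hmul : ∫ ω, Real.exp (-(s * S ω)) * Real.exp (-(s * I ω)) ∂P =
      (∫ ω, Real.exp (-(s * S ω)) ∂P) * ∫ ω, Real.exp (-(s * I ω)) ∂P :=
    hcomp.integral_fun_mul_eq_mul_integral hSmeas.1 hImeas.1
  rw [hmul]
  ring
end
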